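/- arXiv:2407.19585 — 2 statements merged into one kernel-verified Lean document; each statement's English description precedes it below -/
import Mathlib

section
/- Let k be a field, R = k[x,y,z] localized at the maximal ideal (x,y,z), and σ : ℤ_{>0} → ℤ_{>0} any function. Define I₀ = R and I_n = (z^{n+2}) + z^{n+1}(x,y)^{σ(n)} for n ≥ 1. Then {I_n} is a graded filtration of R (i.e., I_m I_n ⊆ I_{m+n} for all m, n ≥ 0) and λ_R(I_n / m_R I_n) = σ(n) + 2 for all n ≥ 1. -/
open MvPolynomial

/-- The module `I / m_R I` for an ideal `I` of a local ring `R`. -/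
abbrev fiberModule (R : Type*) [CommRing R] [IsLocalRing R] (I : Ideal R) :=
  I ⧸ (Submodule.comap (I : Submodule R R).subtype
        (IsLocalRing.maximalIdeal R • (I : Submodule R R)))



section Flag
variable {R : Type*} [CommRing R] (m : Ideal R)
set_option linter.unusedSectionVars false

/-- The flag submodule: functions vanishing on coordinates `≥ i`. -/
def myW (d i : ℕ) : Submodule R (Fin d → R ⧸ m) :=
  Submodule.pi {j : Fin d | i ≤ (j : ℕ)} (fun _ => ⊥)

lemma myW_mem {d i : ℕ} {f : Fin d → R ⧸ m} :
    f ∈ myW m d i ↔ ∀ j : Fin d, i ≤ (j : ℕ) → f j = 0 := by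
  simp [myW, Submodule.mem_pi]

lemma myW_zero (d : ℕ) : myW m d 0 = ⊥ := by
  ext f
  simp only [myW_mem, Submodule.mem_bot]
  constructor
  · intro h; funext j; exact h j (Nat.zero_le _)
  · rintro rfl j _; rfl

lemma myW_top (d : ℕ) : myW m d d = ⊤ := by
  ext f
  simp only [myW_mem, Submodule.mem_top, iff_true]
  intro j hj
  exact absurd j.isLt (by omega)

lemma myW_mono {d : ℕ} {i i' : ℕ} (h : i ≤ i') : myW m d i ≤ myW m d i' := by
  intro f hf
  rw [myW_mem] at hf ⊢
  exact fun j hj => hf j (le_trans h hj)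

variable [m.IsMaximal] in
lemma myW_covby {d i : ℕ} (hi : i < d) : myW m d i ⋖ myW m d (i + 1) := by
  letI : Field (R ⧸ m) := Ideal.Quotient.field m
  set ι : Fin d := ⟨i, hi⟩ with hι
  have hne : (1 : R ⧸ m) ≠ 0 := one_ne_zero
  have hsingle : Pi.single ι (1 : R ⧸ m) ∈ myW m d (i + 1) := by
    rw [myW_mem]
    intro j hj
    have : j ≠ ι := by
      intro h; subst h; simp [hι] at hj
    simp [Pi.single_apply, this]
  constructor
  · -- strict inequality
    refine lt_of_le_of_ne (myW_mono m (Nat.le_succ i)) ?_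
    intro h
    have : Pi.single ι (1 : R ⧸ m) ∈ myW m d i := h ▸ hsingle
    rw [myW_mem] at this
    have := this ι (le_refl _)
    simp at this
  · -- nothing strictly between
    rintro N ⟨hle, (hne1 : ¬ N ≤ myW m d i)⟩ ⟨hle2, hne2⟩
    apply hne2
    -- find f in N not in W i
    obtain ⟨f, hfN, hf⟩ : ∃ f, f ∈ N ∧ ¬ f ∈ myW m d i := by
      by_contra h
      push_neg at h
      exact hne1 h
    have hfW : f ∈ myW m d (i+1) := hle2 hfN
    rw [myW_mem] at hfW
    have hfι : f ι ≠ 0 := by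
      intro h0
      apply hf
      rw [myW_mem]
      intro j hj
      rcases Nat.lt_or_ge i (j : ℕ) with h' | h'
      · exact hfW j h'
      · have : (j : ℕ) = i := le_antisymm h' hj
        have : j = ι := Fin.ext this
        rw [this]; exact h0
    -- show W (i+1) ≤ N
    intro g hg
    rw [myW_mem] at hg
    -- pick r : R with (r : R⧸m) * f ι = g ι
    obtain ⟨r, hr⟩ : ∃ r : R, r • f ι = g ι := by
      obtain ⟨v, hv⟩ := Ideal.Quotient.mk_surjective (I := m) (g ι * (f ι)⁻¹)
      refine ⟨v, ?_⟩
      have : (Ideal.Quotient.mk m v) • f ι = (g ι * (f ι)⁻¹) * f ι := by rw [hv]; rfl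
      rw [inv_mul_cancel_right₀ hfι] at this
      simpa [Algebra.smul_def] using this
    have hdiff : g - r • f ∈ myW m d i := by
      rw [myW_mem]
      intro j hj
      rcases Nat.lt_or_ge i (j : ℕ) with h' | h'
      · simp [hg j h', hfW j h']
      · have hj' : j = ι := Fin.ext (le_antisymm h' hj)
        subst hj'
        simp [Pi.sub_apply, Pi.smul_apply, hr]
    have : g - r • f + r • f ∈ N := N.add_mem (hle hdiff) (N.smul_mem r hfN)
    simpa using this

variable [m.IsMaximal] in
theorem exists_flag_series (d : ℕ) :
    ∃ s : CompositionSeries (Submodule R (Fin d → R ⧸ m)),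
      s.head = ⊥ ∧ s.last = ⊤ ∧ s.length = d := by
  refine ⟨⟨d, fun i => myW m d i, fun i => ?_⟩, ?_, ?_, rfl⟩
  · show myW m d _ ⋖ myW m d _
    simpa using myW_covby m (i.isLt)
  · show myW m d _ = ⊥
    simpa using myW_zero m d
  · show myW m d _ = ⊤
    simpa using myW_top m d

end Flag

section Transport

theorem exists_comp_series_of_equiv {R M N : Type*} [Ring R]
    [AddCommGroup M] [Module R M] [AddCommGroup N] [Module R N]
    (e : M ≃ₗ[R] N)
    (h : ∃ s : CompositionSeries (Submodule R N), s.head = ⊥ ∧ s.last = ⊤ ∧ s.length = d) :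
    ∃ s : CompositionSeries (Submodule R M), s.head = ⊥ ∧ s.last = ⊤ ∧ s.length = d := by
  obtain ⟨s, h1, h2, h3⟩ := h
  let φ : Submodule R N ≃o Submodule R M := (Submodule.orderIsoMapComap e).symm
  refine ⟨⟨s.length, fun i => φ (s.toFun i), fun i => ?_⟩, ?_, ?_, h3⟩
  · show φ _ ⋖ φ _
    rw [apply_covBy_apply_iff (φ : Submodule R N ≃o Submodule R M)]
    exact s.step i
  · show φ _ = ⊥
    rw [show s.toFun 0 = s.head from rfl, h1]
    exact OrderIso.map_bot φ
  · show φ _ = ⊤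
    rw [show s.toFun _ = s.last from rfl, h2]
    exact OrderIso.map_top φ

end Transport

section Part1
variable {R : Type*} [CommRing R]

theorem filtration_part {x y z : R} {σ : ℕ → ℕ} (I : ℕ → Ideal R)
    (hI0 : I 0 = ⊤)
    (hIn : ∀ n : ℕ, 1 ≤ n →
      I n = Ideal.span {z ^ (n + 2)}
            + Ideal.span {z ^ (n + 1)} * (Ideal.span {x, y}) ^ (σ n)) :
    ∀ m n : ℕ, I m * I n ≤ I (m + n) := by
  intro m n
  rcases Nat.eq_zero_or_pos m with rfl | hm
  · rw [hI0, Ideal.top_mul, Nat.zero_add]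
  rcases Nat.eq_zero_or_pos n with rfl | hn
  · rw [hI0, Ideal.mul_top, Nat.add_zero]
  have hmn : 1 ≤ m + n := le_trans hm (Nat.le_add_right _ _)
  rw [hIn m hm, hIn n hn, hIn (m + n) hmn]
  have hle : ∀ a : ℕ, m + n + 2 ≤ a → (Ideal.span {z ^ a} : Ideal R) ≤
      Ideal.span {z ^ (m + n + 2)} + Ideal.span {z ^ (m + n + 1)} * Ideal.span {x, y} ^ σ (m + n) := by
    intro a ha
    refine le_trans ?_ le_sup_left
    rw [Ideal.span_singleton_le_span_singleton]
    exact pow_dvd_pow z ha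
  rw [add_mul, mul_add, mul_add]
  have e1 : Ideal.span {z ^ (m + 2)} * Ideal.span {z ^ (n + 2)} = (Ideal.span {z ^ (m + n + 4)} : Ideal R) := by
    rw [Ideal.span_singleton_mul_span_singleton, ← pow_add]
    ring_nf
  have e2 : Ideal.span {z ^ (m + 2)} * (Ideal.span {z ^ (n + 1)} * Ideal.span {x, y} ^ σ n) ≤
      (Ideal.span {z ^ (m + n + 3)} : Ideal R) := by
    rw [← mul_assoc, Ideal.span_singleton_mul_span_singleton, ← pow_add]
    calc Ideal.span {z ^ (m + 2 + (n + 1))} * Ideal.span {x, y} ^ σ n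
        ≤ Ideal.span {z ^ (m + 2 + (n + 1))} * ⊤ := mul_le_mul_right le_top _
      _ = Ideal.span {z ^ (m + 2 + (n + 1))} := Ideal.mul_top _
      _ = Ideal.span {z ^ (m + n + 3)} := by ring_nf
  have e3 : Ideal.span {z ^ (m + 1)} * Ideal.span {x, y} ^ σ m * Ideal.span {z ^ (n + 2)} ≤
      (Ideal.span {z ^ (m + n + 3)} : Ideal R) := by
    rw [mul_comm (Ideal.span {z ^ (m + 1)}) _, mul_assoc, Ideal.span_singleton_mul_span_singleton, ← pow_add]
    calc Ideal.span {x, y} ^ σ m * Ideal.span {z ^ (m + 1 + (n + 2))}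
        ≤ ⊤ * Ideal.span {z ^ (m + 1 + (n + 2))} := mul_le_mul_left le_top _
      _ = Ideal.span {z ^ (m + 1 + (n + 2))} := Ideal.top_mul _
      _ = Ideal.span {z ^ (m + n + 3)} := by ring_nf
  have e4 : Ideal.span {z ^ (m + 1)} * Ideal.span {x, y} ^ σ m *
      (Ideal.span {z ^ (n + 1)} * Ideal.span {x, y} ^ σ n) ≤ (Ideal.span {z ^ (m + n + 2)} : Ideal R) := by
    calc Ideal.span {z ^ (m + 1)} * Ideal.span {x, y} ^ σ m *
          (Ideal.span {z ^ (n + 1)} * Ideal.span {x, y} ^ σ n)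
        = Ideal.span {z ^ (m + 1)} * Ideal.span {z ^ (n + 1)} *
          (Ideal.span {x, y} ^ σ m * Ideal.span {x, y} ^ σ n) := by ring
      _ = Ideal.span {z ^ (m + n + 2)} * (Ideal.span {x, y} ^ σ m * Ideal.span {x, y} ^ σ n) := by
          rw [Ideal.span_singleton_mul_span_singleton, ← pow_add]; ring_nf
      _ ≤ Ideal.span {z ^ (m + n + 2)} * ⊤ := mul_le_mul_right le_top _
      _ = Ideal.span {z ^ (m + n + 2)} := Ideal.mul_top _
  refine sup_le (sup_le ?_ ?_) (sup_le ?_ ?_)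
  · rw [e1]; exact hle _ (by omega)
  · exact le_trans e2 (hle _ (by omega))
  · exact le_trans e3 (hle _ (by omega))
  · exact le_trans e4 (hle _ (by omega))

end Part1

section Poly
variable {k : Type*} [Field k]

local notation "S" => MvPolynomial (Fin 3) k

lemma memP_iff (f : S) :
    f ∈ Ideal.span {(X 0 : S), X 1, X 2} ↔ constantCoeff f = 0 := by
  have hset : ({(X 0 : S), X 1, X 2} : Set S) = MvPolynomial.X '' (Set.univ : Set (Fin 3)) := by
    ext p
    simp only [Set.mem_insert_iff, Set.mem_singleton_iff, Set.image_univ, Set.mem_range]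
    constructor
    · rintro (rfl | rfl | rfl)
      exacts [⟨0, rfl⟩, ⟨1, rfl⟩, ⟨2, rfl⟩]
    · rintro ⟨i, rfl⟩
      fin_cases i
      · exact Or.inl rfl
      · exact Or.inr (Or.inl rfl)
      · exact Or.inr (Or.inr rfl)
  rw [hset, mem_ideal_span_X_image]
  rw [constantCoeff_eq]; show _ ↔ coeff 0 f = 0
  constructor
  · intro h
    by_contra h0
    obtain ⟨i, _, hi⟩ := h 0 (mem_support_iff.mpr h0)
    simp at hi
  · intro h m hm
    by_contra hc
    push_neg at hc
    have : m = 0 := by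
      ext i
      have := hc i (Set.mem_univ i)
      simpa using this
    rw [this] at hm
    exact (mem_support_iff.mp hm) h

lemma vanish_pow (N : ℕ) (F : S) (hF : F ∈ (Ideal.span {(X 0 : S), X 1}) ^ N) :
    ∀ m : Fin 3 →₀ ℕ, m 0 + m 1 < N → coeff m F = 0 := by
  induction N generalizing F with
  | zero => intro m hm; omega
  | succ N ih =>
    intro m hm
    rw [pow_succ] at hF
    refine Submodule.mul_induction_on hF ?_ ?_
    · intro a ha b hb
      obtain ⟨p, q, hpq⟩ := Ideal.mem_span_pair.mp hb
      rw [← hpq, mul_add, ← mul_assoc, ← mul_assoc]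
      rw [coeff_add, coeff_mul_X', coeff_mul_X']
      have h0 : (if (0 : Fin 3) ∈ m.support then coeff (m - Finsupp.single 0 1) (a * p) else 0) = 0 := by
        split_ifs with h
        · have hm0 : m 0 ≠ 0 := Finsupp.mem_support_iff.mp h
          apply ih (a * p) (Ideal.mul_mem_right _ _ ha)
          simp only [Finsupp.tsub_apply, Finsupp.single_apply]
          simp only [show ((0:Fin 3) = 0) = True from by simp, if_true]
          have h01 : ¬ ((0 : Fin 3) = 1) := by decide
          simp only [h01, if_false]
          omega
        · rfl
      have h1 : (if (1 : Fin 3) ∈ m.support then coeff (m - Finsupp.single 1 1) (a * q) else 0) = 0 := by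
        split_ifs with h
        · have hm1 : m 1 ≠ 0 := Finsupp.mem_support_iff.mp h
          apply ih (a * q) (Ideal.mul_mem_right _ _ ha)
          simp only [Finsupp.tsub_apply, Finsupp.single_apply]
          have h10 : ¬ ((1 : Fin 3) = 0) := by decide
          simp only [h10, if_false]
          simp only [show ((1:Fin 3) = 1) = True from by simp, if_true]
          omega
        · rfl
      rw [h0, h1, add_zero]
    · intro f g hf hg
      rw [coeff_add, hf, hg, add_zero]


lemma key_poly (n σA : ℕ) (hσ : 1 ≤ σA) (u : S) (hu : constantCoeff u ≠ 0)
    (C : Fin (σA + 2) → S) (G : S)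
    (hG : G ∈ Ideal.span {(X 2 : S) ^ (n + 2)} * Ideal.span {(X 0 : S), X 1, X 2}
        + Ideal.span {(X 2 : S) ^ (n + 1)} * (Ideal.span {(X 0 : S), X 1}) ^ (σA + 1))
    (heq : (∑ i, C i * (Fin.cases ((X 2 : S) ^ (n + 2))
        (fun j : Fin (σA + 1) => (X 2 : S) ^ (n + 1) * X 0 ^ (j : ℕ) * X 1 ^ (σA - (j : ℕ))) i)) * u = G) :
    ∀ i, constantCoeff (C i) = 0 := by
  classical
  -- exponent vectors
  set ν : Fin (σA + 2) → (Fin 3 →₀ ℕ) := Fin.cases (Finsupp.single 2 (n + 2))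
    (fun j : Fin (σA + 1) => Finsupp.single 2 (n + 1) + Finsupp.single 0 (j : ℕ)
      + Finsupp.single 1 (σA - (j : ℕ))) with hν
  have hν0val : ∀ s : Fin 3, ν 0 s = if s = 2 then n + 2 else 0 := by
    intro s
    fin_cases s <;> simp [hν, Finsupp.single_apply]
  have hνsval : ∀ (j : Fin (σA + 1)) (s : Fin 3),
      ν j.succ s = if s = 0 then (j : ℕ) else if s = 1 then σA - (j : ℕ) else n + 1 := by
    intro j s
    have : ν j.succ = Finsupp.single 2 (n + 1) + Finsupp.single 0 (j : ℕ)
        + Finsupp.single 1 (σA - (j : ℕ)) := by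
      rw [hν]; simp
    rw [this]
    fin_cases s <;> simp [Finsupp.single_apply]
  -- the monomial form of the generators
  have hΓ : ∀ i : Fin (σA + 2), (Fin.cases ((X 2 : S) ^ (n + 2))
      (fun j : Fin (σA + 1) => (X 2 : S) ^ (n + 1) * X 0 ^ (j : ℕ) * X 1 ^ (σA - (j : ℕ))) i)
      = monomial (ν i) (1 : k) := by
    intro i
    induction i using Fin.cases with
    | zero => simp [hν, X_pow_eq_monomial]
    | succ j =>
      simp only [Fin.cases_succ, hν]
      rw [X_pow_eq_monomial, X_pow_eq_monomial, X_pow_eq_monomial, monomial_mul, monomial_mul]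
      simp
  -- comparison of exponent vectors
  have hle : ∀ i i' : Fin (σA + 2), ν i' ≤ ν i ↔ i' = i := by
    intro i i'
    constructor
    · intro h
      rw [Finsupp.le_def] at h
      induction i using Fin.cases with
      | zero =>
        induction i' using Fin.cases with
        | zero => rfl
        | succ j =>
          exfalso
          have h0 := h 0; have h1 := h 1
          rw [hνsval, hν0val] at h0 h1
          simp at h0 h1
          subst h0; simp at h1
          omega
      | succ a =>
        induction i' using Fin.cases with
        | zero =>
          exfalso
          have h2 := h 2
          rw [hνsval, hν0val] at h2
          simp at h2
        | succ j =>
          have h0 := h 0; have h1 := h 1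
          rw [hνsval j 0, hνsval a 0] at h0
          rw [hνsval j 1, hνsval a 1] at h1
          have e00 : ((0 : Fin 3) = 0) := rfl
          have e10 : ¬ ((1 : Fin 3) = 0) := by decide
          have e11 : ((1 : Fin 3) = 1) := rfl
          rw [if_pos e00, if_pos e00] at h0
          rw [if_neg e10, if_neg e10, if_pos e11, if_pos e11] at h1
          have hj := j.isLt; have ha := a.isLt
          have : (j : ℕ) = (a : ℕ) := by omega
          congr 1
          exact Fin.ext this
    · rintro rfl; exact le_refl _
  have e20 : ¬ ((2 : Fin 3) = 0) := by decide
  have e21 : ¬ ((2 : Fin 3) = 1) := by decide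
  have e02 : ¬ ((0 : Fin 3) = 2) := by decide
  have e12 : ¬ ((1 : Fin 3) = 2) := by decide
  have e22 : ((2 : Fin 3) = 2) := rfl
  have e00 : ((0 : Fin 3) = 0) := rfl
  have e11 : ((1 : Fin 3) = 1) := rfl
  have e10 : ¬ ((1 : Fin 3) = 0) := by decide
  have V00 : ν 0 0 = 0 := by rw [hν0val 0, if_neg e02]
  have V01 : ν 0 1 = 0 := by rw [hν0val 1, if_neg e12]
  have V02 : ν 0 2 = n + 2 := by rw [hν0val 2, if_pos e22]
  have Vs0 : ∀ j : Fin (σA + 1), ν j.succ 0 = (j : ℕ) := by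
    intro j; rw [hνsval j 0, if_pos e00]
  have Vs1 : ∀ j : Fin (σA + 1), ν j.succ 1 = σA - (j : ℕ) := by
    intro j; rw [hνsval j 1, if_neg e10, if_pos e11]
  have Vs2 : ∀ j : Fin (σA + 1), ν j.succ 2 = n + 1 := by
    intro j; rw [hνsval j 2, if_neg e20, if_neg e21]
  -- coefficient of LHS
  have hLHS : ∀ i : Fin (σA + 2), coeff (ν i) ((∑ i', C i' * monomial (ν i') (1 : k)) * u)
      = constantCoeff (C i) * constantCoeff u := by
    intro i
    rw [Finset.sum_mul, coeff_sum]
    have hterm : ∀ i' : Fin (σA + 2), coeff (ν i) (C i' * monomial (ν i') 1 * u)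
        = if i' = i then constantCoeff (C i' * u) else 0 := by
      intro i'
      have hre : C i' * monomial (ν i') 1 * u = (C i' * u) * monomial (ν i') 1 := by ring
      rw [hre, coeff_mul_monomial']
      by_cases h : i' = i
      · subst h
        rw [if_pos (le_refl _), if_pos rfl, tsub_self, mul_one, constantCoeff_eq]
      · rw [if_neg (fun hc => h ((hle i i').mp hc)), if_neg h]
    rw [Finset.sum_congr rfl (fun i' _ => hterm i'), Finset.sum_ite_eq' Finset.univ i,
      if_pos (Finset.mem_univ i), map_mul]
  -- conclusion
  intro i
  obtain ⟨w1, hw1, w2, hw2, hsum⟩ := Submodule.mem_sup.mp hG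
  obtain ⟨p, hp, hw1e⟩ := Ideal.mem_span_singleton_mul.mp hw1
  obtain ⟨q, hq, hw2e⟩ := Ideal.mem_span_singleton_mul.mp hw2
  have hG1 : coeff (ν i) w1 = 0 := by
    rw [← hw1e, X_pow_eq_monomial, mul_comm, coeff_mul_monomial']
    by_cases hile : (Finsupp.single 2 (n + 2) : Fin 3 →₀ ℕ) ≤ ν i
    · rw [if_pos hile, mul_one]
      induction i using Fin.cases with
      | zero =>
        have hsub : ν 0 - Finsupp.single 2 (n + 2) = 0 := by
          have : ν 0 = Finsupp.single 2 (n + 2) := by rw [hν]; simp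
          rw [this, tsub_self]
        rw [hsub]
        have := (memP_iff p).mp hp
        rwa [constantCoeff_eq] at this
      | succ j =>
        exfalso
        rw [Finsupp.le_def] at hile
        have h2 := hile 2
        rw [Vs2 j, Finsupp.single_eq_same] at h2
        omega
    · rw [if_neg hile]
  have hG2 : coeff (ν i) w2 = 0 := by
    rw [← hw2e, X_pow_eq_monomial, mul_comm, coeff_mul_monomial']
    have hile : (Finsupp.single 2 (n + 1) : Fin 3 →₀ ℕ) ≤ ν i := by
      rw [Finsupp.le_def]
      intro s
      by_cases h2 : s = (2 : Fin 3)
      · subst h2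
        rw [Finsupp.single_eq_same]
        induction i using Fin.cases with
        | zero => rw [V02]; omega
        | succ j => rw [Vs2 j]
      · rw [Finsupp.single_eq_of_ne' (fun h => h2 h.symm)]
        exact Nat.zero_le _
    rw [if_pos hile, mul_one]
    apply vanish_pow _ q hq
    rw [Finsupp.tsub_apply, Finsupp.tsub_apply,
      Finsupp.single_eq_of_ne' e20, Finsupp.single_eq_of_ne' e21]
    induction i using Fin.cases with
    | zero => rw [V00, V01]; omega
    | succ j => rw [Vs0 j, Vs1 j]; have := j.isLt; omega
  have hGC : coeff (ν i) G = 0 := by rw [← hsum, coeff_add, hG1, hG2, add_zero]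
  have heq' : (∑ i', C i' * monomial (ν i') (1 : k)) * u = G := by
    rw [← heq]
    congr 1
    exact Finset.sum_congr rfl (fun i' _ => by rw [hΓ i'])
  have hz : constantCoeff (C i) * constantCoeff u = 0 := by
    rw [← hLHS i, heq', hGC]
  rcases mul_eq_zero.mp hz with h | h
  · exact h
  · exact absurd h hu

end Poly

section MonomialSpan
variable {R : Type*} [CommRing R]

lemma span_pair_pow_le (x y : R) (N : ℕ) :
    (Ideal.span {x, y}) ^ N ≤ Ideal.span {w : R | ∃ j, j ≤ N ∧ w = x ^ j * y ^ (N - j)} := by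
  induction N with
  | zero =>
    rw [pow_zero, Ideal.one_eq_top]
    have : (1 : R) ∈ Ideal.span {w : R | ∃ j, j ≤ 0 ∧ w = x ^ j * y ^ (0 - j)} :=
      Ideal.subset_span ⟨0, le_refl _, by simp⟩
    rw [← Ideal.eq_top_iff_one] at this
    rw [this]
  | succ N ih =>
    rw [pow_succ]
    refine le_trans (Ideal.mul_mono ih (le_refl _)) ?_
    rw [Ideal.span_mul_span]
    rw [Ideal.span_le]
    intro w hw
    simp only [Set.mem_mul, Set.mem_singleton_iff] at hw
    obtain ⟨s, ⟨j, hj, rfl⟩, t, ht, rfl⟩ := hw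
    apply Ideal.subset_span
    rcases ht with rfl | rfl
    · refine ⟨j + 1, by omega, ?_⟩
      have hNj : N + 1 - (j + 1) = N - j := by omega
      rw [hNj, pow_succ]
      ring
    · refine ⟨j, by omega, ?_⟩
      have hNj : N + 1 - j = (N - j) + 1 := by omega
      rw [hNj, pow_succ]
      ring

end MonomialSpan
theorem fiber_series_of_generators {R : Type*} [CommRing R] [IsLocalRing R]
    (J : Ideal R) (d : ℕ) (g : Fin d → R) (hgI : ∀ i, g i ∈ J)
    (hspan : Ideal.span (Set.range g) = J)
    (key : ∀ c : Fin d → R, (∑ i, c i * g i) ∈ IsLocalRing.maximalIdeal R * J →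
      ∀ i, c i ∈ IsLocalRing.maximalIdeal R) :
    ∃ s : CompositionSeries (Submodule R (fiberModule R J)),
      s.head = ⊥ ∧ s.last = ⊤ ∧ s.length = d := by
  classical
  set m := IsLocalRing.maximalIdeal R with hm
  haveI : m.IsMaximal := IsLocalRing.maximalIdeal.isMaximal R
  set g' : Fin d → (J : Submodule R R) := fun i => ⟨g i, hgI i⟩ with hg'def
  set N : Submodule R (J : Submodule R R) :=
    Submodule.comap (J : Submodule R R).subtype (m • (J : Submodule R R)) with hNdef
  set Φ : (Fin d → R) →ₗ[R] (fiberModule R J) :=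
    N.mkQ.comp (Fintype.linearCombination R g') with hΦdef
  have hsurj : Function.Surjective Φ := by
    rw [← LinearMap.range_eq_top, hΦdef, LinearMap.range_comp, Fintype.range_linearCombination]
    have hspan' : Submodule.span R (Set.range g') = ⊤ := by
      apply Submodule.map_injective_of_injective (Submodule.injective_subtype (J : Submodule R R))
      rw [Submodule.map_span, Submodule.map_subtype_top]
      have himg : (J : Submodule R R).subtype '' Set.range g' = Set.range g := by
        rw [← Set.range_comp]
        rfl
      rw [himg]; exact hspan
    rw [hspan', Submodule.map_top, Submodule.range_mkQ]
  have hcoe : ∀ c : Fin d → R,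
      (((Fintype.linearCombination R g') c : (J : Submodule R R)) : R) = ∑ i, c i * g i := by
    intro c
    rw [Fintype.linearCombination_apply]
    rw [Submodule.coe_sum]
    apply Finset.sum_congr rfl
    intro i _
    rw [SetLike.val_smul, smul_eq_mul, hg'def]
  have hker : LinearMap.ker Φ = Submodule.pi Set.univ (fun _ : Fin d => (m : Submodule R R)) := by
    ext c
    rw [LinearMap.mem_ker, hΦdef, LinearMap.comp_apply]
    rw [Submodule.mkQ_apply, Submodule.Quotient.mk_eq_zero, hNdef, Submodule.mem_comap]
    rw [Submodule.subtype_apply, hcoe c]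
    have hsm : m • ((J : Ideal R) : Submodule R R) = m * J := Ideal.smul_eq_mul m J
    rw [hsm]
    constructor
    · intro h
      rw [Submodule.mem_pi]
      intro i _
      exact key c h i
    · intro h
      refine Submodule.sum_mem _ ?_
      intro i _
      refine Ideal.mul_mem_mul ?_ (hgI i)
      exact Submodule.mem_pi.mp h i (Set.mem_univ i)
  letI e1 := LinearMap.quotKerEquivOfSurjective Φ hsurj
  letI e2 := Submodule.quotEquivOfEq _ _ hker
  letI e3 := Submodule.quotientPi (fun _ : Fin d => (m : Submodule R R))
  letI e := e1.symm.trans (e2.trans e3)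
  exact exists_comp_series_of_equiv e (exists_flag_series m d)

section MainAux

variable {k : Type*} [Field k]
  (P : Ideal (MvPolynomial (Fin 3) k))

local notation "S" => MvPolynomial (Fin 3) k

end MainAux

set_option maxHeartbeats 1000000 in
theorem main_part2
    {k : Type*} [Field k]
    (P : Ideal (MvPolynomial (Fin 3) k))
    (hP : P = Ideal.span {X 0, X 1, X 2}) [P.IsPrime]
    (x y z : Localization.AtPrime P)
    (hx : x = algebraMap (MvPolynomial (Fin 3) k) (Localization.AtPrime P) (X 0))
    (hy : y = algebraMap (MvPolynomial (Fin 3) k) (Localization.AtPrime P) (X 1))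
    (hz : z = algebraMap (MvPolynomial (Fin 3) k) (Localization.AtPrime P) (X 2))
    (σ : ℕ → ℕ) (hσ : ∀ n, 1 ≤ n → 1 ≤ σ n)
    (I : ℕ → Ideal (Localization.AtPrime P))
    (hIn : ∀ n : ℕ, 1 ≤ n →
      I n = Ideal.span {z ^ (n + 2)}
            + Ideal.span {z ^ (n + 1)} * (Ideal.span {x, y}) ^ (σ n)) :
    ∀ n : ℕ, 1 ≤ n →
      ∃ s : CompositionSeries (Submodule (Localization.AtPrime P)
              (fiberModule (Localization.AtPrime P) (I n))),
        s.head = ⊥ ∧ s.last = ⊤ ∧ s.length = σ n + 2 := by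
  classical
  intro n hn
  set alg := algebraMap (MvPolynomial (Fin 3) k) (Localization.AtPrime P) with halg
  haveI hPmax : (IsLocalRing.maximalIdeal (Localization.AtPrime P)).IsMaximal := IsLocalRing.maximalIdeal.isMaximal (Localization.AtPrime P)
  set m := IsLocalRing.maximalIdeal (Localization.AtPrime P) with hmdef
  have hm : m = Ideal.map alg P := (Localization.AtPrime.map_eq_maximalIdeal).symm
  set d := σ n + 2 with hd
  -- polynomial generators
  set Γ : Fin d → MvPolynomial (Fin 3) k := Fin.cases ((X 2 : MvPolynomial (Fin 3) k) ^ (n + 2))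
    (fun j : Fin (σ n + 1) => (X 2 : MvPolynomial (Fin 3) k) ^ (n + 1) * X 0 ^ (j : ℕ)
      * X 1 ^ (σ n - (j : ℕ))) with hΓdef
  set g : Fin d → (Localization.AtPrime P) := fun i => alg (Γ i) with hgdef
  have hg0 : g 0 = z ^ (n + 2) := by
    rw [hgdef, hΓdef, hz]
    simp [map_pow]
  have hgs : ∀ j : Fin (σ n + 1), g j.succ = z ^ (n + 1) * x ^ (j : ℕ) * y ^ (σ n - (j : ℕ)) := by
    intro j
    rw [hgdef, hΓdef, hx, hy, hz]
    simp [map_mul, map_pow]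
  -- membership of the generators
  have hgI : ∀ i, g i ∈ I n := by
    intro i
    rw [hIn n hn]
    induction i using Fin.cases with
    | zero =>
      rw [hg0]
      exact le_sup_left (α := Ideal (Localization.AtPrime P)) (Ideal.subset_span rfl)
    | succ j =>
      rw [hgs j]
      refine le_sup_right (α := Ideal (Localization.AtPrime P)) ?_
      rw [mul_assoc]
      refine Ideal.mul_mem_mul (Ideal.subset_span rfl) ?_
      have hx' : x ∈ Ideal.span {x, y} := Ideal.subset_span (by simp)
      have hy' : y ∈ Ideal.span {x, y} := Ideal.subset_span (by simp)
      have h1 : x ^ (j : ℕ) ∈ (Ideal.span {x, y}) ^ (j : ℕ) := Ideal.pow_mem_pow hx' _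
      have h2 : y ^ (σ n - (j : ℕ)) ∈ (Ideal.span {x, y}) ^ (σ n - (j : ℕ)) :=
        Ideal.pow_mem_pow hy' _
      have := Ideal.mul_mem_mul h1 h2
      rw [← pow_add] at this
      have hj : (j : ℕ) + (σ n - (j : ℕ)) = σ n := by have := j.isLt; omega
      rwa [hj] at this
  -- span of the generators
  have hspan : Ideal.span (Set.range g) = I n := by
    apply le_antisymm
    · rw [Ideal.span_le]
      rintro _ ⟨i, rfl⟩
      exact hgI i
    · rw [hIn n hn]
      refine sup_le ?_ ?_
      · rw [Ideal.span_le, Set.singleton_subset_iff]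
        exact hg0 ▸ Ideal.subset_span ⟨0, rfl⟩
      · refine le_trans (Ideal.mul_mono (le_refl _) (span_pair_pow_le x y (σ n))) ?_
        rw [Ideal.span_mul_span, Ideal.span_le]
        intro w hw
        simp only [Set.mem_mul, Set.mem_singleton_iff] at hw
        obtain ⟨s, hs, t, ⟨j, hj, rfl⟩, rfl⟩ := hw
        subst hs
        apply Ideal.subset_span
        refine ⟨Fin.succ ⟨j, by omega⟩, ?_⟩
        rw [hgs ⟨j, by omega⟩, mul_assoc]
  -- the polynomial-side ideal
  set K : Ideal (MvPolynomial (Fin 3) k) :=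
    Ideal.span {(X 2 : MvPolynomial (Fin 3) k) ^ (n + 2)} * Ideal.span {(X 0 : MvPolynomial (Fin 3) k), X 1, X 2}
    + Ideal.span {(X 2 : MvPolynomial (Fin 3) k) ^ (n + 1)} * (Ideal.span {(X 0 : MvPolynomial (Fin 3) k), X 1}) ^ (σ n + 1)
    with hKdef
  -- m * I n ≤ map alg K
  have hmap_span : ∀ (s : Set (MvPolynomial (Fin 3) k)),
      Ideal.map alg (Ideal.span s) = Ideal.span (alg '' s) := fun s => Ideal.map_span alg s
  have hIn_map : I n = Ideal.map alg
      (Ideal.span {(X 2 : MvPolynomial (Fin 3) k) ^ (n + 2)}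
       + Ideal.span {(X 2 : MvPolynomial (Fin 3) k) ^ (n + 1)} * (Ideal.span {(X 0 : MvPolynomial (Fin 3) k), X 1}) ^ (σ n)) := by
    rw [Submodule.add_eq_sup, Ideal.map_sup, Ideal.map_mul, Ideal.map_pow,
      hmap_span, hmap_span, hmap_span]
    rw [hIn n hn, Submodule.add_eq_sup]
    congr 1
    · congr 1
      rw [Set.image_singleton, map_pow, ← hz]
    · congr 1
      · rw [Set.image_singleton, map_pow, ← hz]
      · congr 1
        rw [Set.image_insert_eq, Set.image_singleton, ← hx, ← hy]
  have hT : m * I n ≤ Ideal.map alg K := by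
    rw [hm, hIn_map, ← Ideal.map_mul]
    apply Ideal.map_mono
    rw [hP]
    rw [mul_add]
    refine sup_le ?_ ?_
    · rw [mul_comm]
      exact le_sup_left
    · -- span{X0,X1,X2} * (span{X2^{n+1}} * A^σ) ≤ K
      have hsplit : (Ideal.span {(X 0 : MvPolynomial (Fin 3) k), X 1, X 2}) =
          Ideal.span {(X 0 : MvPolynomial (Fin 3) k), X 1} ⊔ Ideal.span {(X 2 : MvPolynomial (Fin 3) k)} := by
        rw [← Ideal.span_union]
        congr 1
        ext w
        simp only [Set.mem_insert_iff, Set.mem_singleton_iff, Set.mem_union]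
        tauto
      rw [hsplit, ← Submodule.add_eq_sup, add_mul]
      refine sup_le ?_ ?_
      · -- A * (span{X2^{n+1}} * A^σ) = span{X2^{n+1}} * A^{σ+1} ≤ K
        refine le_trans (le_of_eq ?_) (le_sup_right : _ ≤ K)
        rw [← mul_assoc, mul_comm (Ideal.span {(X 0 : MvPolynomial (Fin 3) k), X 1}) _, mul_assoc]
        congr 1
        rw [← pow_succ']
      · -- span{X2} * (span{X2^{n+1}} * A^σ) ≤ span{X2^{n+2}} * P-part
        refine le_trans ?_ (le_sup_left : _ ≤ K)
        rw [← mul_assoc, Ideal.span_singleton_mul_span_singleton, ← pow_succ']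
        refine Ideal.mul_mono (le_refl _) ?_
        refine le_trans (Ideal.pow_le_self (by have := hσ n hn; omega)) ?_
        apply Ideal.span_mono
        intro w hw
        simp only [Set.mem_insert_iff, Set.mem_singleton_iff] at hw ⊢
        tauto
  -- the key kernel property
  have key : ∀ c : Fin d → (Localization.AtPrime P), (∑ i, c i * g i) ∈ Ideal.map alg K → ∀ i, c i ∈ m := by
    intro c hc i
    obtain ⟨⟨GG, uu⟩, hGu⟩ := (IsLocalization.mem_map_algebraMap_iff P.primeCompl (Localization.AtPrime P)).mp hc
    obtain ⟨t, hct⟩ := IsLocalization.exist_integer_multiples_of_finite P.primeCompl c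
    choose Cf hCf using hct
    have huu : constantCoeff (uu : MvPolynomial (Fin 3) k) ≠ 0 := by
      intro h0
      have hmem : (uu : MvPolynomial (Fin 3) k) ∈ Ideal.span {(X 0 : MvPolynomial (Fin 3) k), X 1, X 2} :=
        (memP_iff _).mpr h0
      exact uu.2 ((SetLike.le_def.mp (le_of_eq hP.symm)) hmem)
    have htG : (t : MvPolynomial (Fin 3) k) * GG ∈ K := Ideal.mul_mem_left K _ GG.2
    have heqS : (∑ i', Cf i' * Γ i') * (uu : MvPolynomial (Fin 3) k)
        = (t : MvPolynomial (Fin 3) k) * GG := by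
      have hinj : Function.Injective alg := by
        refine IsLocalization.injective (M := P.primeCompl) (Localization.AtPrime P) ?_
        intro a ha
        exact mem_nonZeroDivisors_of_ne_zero (fun h => ha (h ▸ P.zero_mem))
      apply hinj
      rw [map_mul, map_mul, map_sum]
      have : ∀ i', alg (Cf i' * Γ i') = (alg (t : MvPolynomial (Fin 3) k)) * (c i' * g i') := by
        intro i'
        rw [map_mul, hCf i', Algebra.smul_def, hgdef]
        ring
      have hGu' : (∑ i', c i' * g i') * alg (uu : MvPolynomial (Fin 3) k)
          = alg (GG : MvPolynomial (Fin 3) k) := hGu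
      rw [Finset.sum_congr rfl (fun i' _ => this i'), ← Finset.mul_sum]
      rw [mul_assoc, hGu']
    have hcc : constantCoeff (Cf i) = 0 :=
      key_poly n (σ n) (hσ n hn) (uu : MvPolynomial (Fin 3) k) huu Cf
        ((t : MvPolynomial (Fin 3) k) * GG) htG heqS i
    have hCfP : Cf i ∈ P :=
      (SetLike.le_def.mp (le_of_eq hP.symm)) ((memP_iff _).mpr hcc)
    have : alg (Cf i) ∈ m := by rw [hm]; exact Ideal.mem_map_of_mem alg hCfP
    rw [hCf i, Algebra.smul_def] at this
    have hunit : IsUnit (alg (t : MvPolynomial (Fin 3) k)) := IsLocalization.map_units (Localization.AtPrime P) t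
    exact (Ideal.unit_mul_mem_iff_mem m hunit).mp this
  exact fiber_series_of_generators (I n) d g hgI hspan
    (fun c h i => key c (hT h) i)

theorem filtration_fiber_length_example
    (k : Type*) [Field k]
    (P : Ideal (MvPolynomial (Fin 3) k))
    (hP : P = Ideal.span {X 0, X 1, X 2}) [P.IsPrime]
    (x y z : Localization.AtPrime P)
    (hx : x = algebraMap (MvPolynomial (Fin 3) k) (Localization.AtPrime P) (X 0))
    (hy : y = algebraMap (MvPolynomial (Fin 3) k) (Localization.AtPrime P) (X 1))
    (hz : z = algebraMap (MvPolynomial (Fin 3) k) (Localization.AtPrime P) (X 2))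
    (σ : ℕ → ℕ) (hσ : ∀ n, 1 ≤ n → 1 ≤ σ n)
    (I : ℕ → Ideal (Localization.AtPrime P))
    (hI0 : I 0 = ⊤)
    (hIn : ∀ n : ℕ, 1 ≤ n →
      I n = Ideal.span {z ^ (n + 2)}
            + Ideal.span {z ^ (n + 1)} * (Ideal.span {x, y}) ^ (σ n)) :
    (∀ m n : ℕ, I m * I n ≤ I (m + n)) ∧
    ∀ n : ℕ, 1 ≤ n →
      ∃ s : CompositionSeries (Submodule (Localization.AtPrime P)
              (fiberModule (Localization.AtPrime P) (I n))),
        s.head = ⊥ ∧ s.last = ⊤ ∧ s.length = σ n + 2 := by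
  constructor
  · exact filtration_part I hI0 hIn
  · exact main_part2 P hP x y z hx hy hz σ hσ I hIn
end

section
/- Let R be a Noetherian local ring with maximal ideal m_R, let R → S be a finite ring extension with S reduced semi-local, and let J be an ideal of S with I = J ∩ R. Suppose m_R ∈ Ass_R(R/I). Then there exists a maximal ideal q of S such that q ∈ Ass_S(S/J). -/
theorem maximal_associated_prime_ascends
    {R S : Type*} [CommRing R] [IsNoetherianRing R] [IsLocalRing R]
    [CommRing S] [IsReduced S] [Algebra R S]
    (hinj : Function.Injective (algebraMap R S))
    [Module.Finite R S]
    (hsemilocal : {q : Ideal S | q.IsMaximal}.Finite)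
    (J : Ideal S) (I : Ideal R) (hI : I = J.comap (algebraMap R S))
    (hass : IsLocalRing.maximalIdeal R ∈ associatedPrimes R (R ⧸ I)) :
    ∃ q : Ideal S, q.IsMaximal ∧ q ∈ associatedPrimes S (S ⧸ J) := by
  have hNS : IsNoetherianRing S := isNoetherian_of_tower R inferInstance
  obtain ⟨hm, y, hy⟩ := isAssociatedPrime_iff.mp hass
  obtain ⟨y₀, rfl⟩ := Ideal.Quotient.mk_surjective y
  set z : S ⧸ J := Ideal.Quotient.mk J (algebraMap R S y₀) with hzdef
  -- key: r • z = 0 ↔ r ∈ m_R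
  have key : ∀ r : R, r • z = 0 ↔ r ∈ IsLocalRing.maximalIdeal R := by
    intro r
    have h1 : r • z = Ideal.Quotient.mk J (algebraMap R S (r * y₀)) := by
      rw [hzdef, map_mul, ← Algebra.smul_def]
      exact (Submodule.Quotient.mk_smul J r (algebraMap R S y₀)).symm
    rw [h1, Ideal.Quotient.eq_zero_iff_mem, ← Ideal.mem_comap, ← hI,
      ← Ideal.Quotient.eq_zero_iff_mem, hy,
      Submodule.mem_colon_singleton, Submodule.mem_bot]
    have h2 : r • (Ideal.Quotient.mk I y₀) = Ideal.Quotient.mk I (r * y₀) :=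
      (Submodule.Quotient.mk_smul I _ _).symm
    rw [h2]
  have hz : z ≠ 0 := by
    intro h
    have := (key 1).mp (by rw [one_smul, h])
    exact (IsLocalRing.maximalIdeal.isMaximal R).ne_top ((Ideal.eq_top_iff_one _).mpr this)
  -- the submodule S•z is nontrivial
  have : Nontrivial ↥(S ∙ z) :=
    ⟨⟨z, Submodule.mem_span_singleton_self z⟩, 0, by simpa [Subtype.ext_iff] using hz⟩
  obtain ⟨q, hq⟩ := associatedPrimes.nonempty S ↥(S ∙ z)
  refine ⟨q, ?_, associatedPrimes.subset_of_injective (Submodule.injective_subtype _) hq⟩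
  obtain ⟨hqp, w, hw⟩ := isAssociatedPrime_iff.mp hq
  obtain ⟨s, hs⟩ := Submodule.mem_span_singleton.mp w.2
  -- comap q = maximal ideal of R
  have hcomap : q.comap (algebraMap R S) = IsLocalRing.maximalIdeal R := by
    refine ((IsLocalRing.maximalIdeal.isMaximal R).eq_of_le ?_ ?_).symm
    · intro h
      exact hqp.ne_top ((Ideal.eq_top_iff_one _).mpr
        (by simpa using (Ideal.eq_top_iff_one _).mp h))
    · intro r hr
      rw [Ideal.mem_comap, hw, Submodule.mem_colon_singleton, Submodule.mem_bot]
      have hz0 : algebraMap R S r • z = 0 := by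
        rw [algebraMap_smul]; exact (key r).mpr hr
      apply Subtype.ext
      rw [Submodule.coe_smul, ← hs, smul_comm, hz0, smul_zero]
      rfl
  haveI := hqp
  have hqmax : q.IsMaximal := Ideal.isMaximal_of_isIntegral_of_isMaximal_comap q
    (hcomap ▸ IsLocalRing.maximalIdeal.isMaximal R)
  exact hqmax
end
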